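/- In the hand-over-hand locking list, the only events that change the abstract set AbS (nodes reachable from Head) are the write n1.next = n3 in HoHAdd (which adds node n3 to AbS) and the write n1.next = n2.next in HoHRemove (which removes node n2 from AbS); moreover the first adds exactly {n3} to AbS and the second removes exactly {n2} from AbS. -/
import Mathlib


/-- A global state of the hand-over-hand locking list. -/
structure HState (Node : Type) where
  val   : Node → ℤ
  nxt   : Node → Option Node
  lockd : Node → Bool
  head  : Node
  tail  : Node

variable {Node : Type} [DecidableEq Node]

/-- Pointwise function update. -/
def upd {α : Type} (f : Node → α) (n : Node) (a : α) : Node → α :=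
  fun m => if m = n then a else f m

/-- `HReach S n`: node `n` is reachable from `Head` via next pointers. -/
def HReach (S : HState Node) (n : Node) : Prop :=
  Relation.ReflTransGen (fun a b => S.nxt a = some b) S.head n

/-- The abstract set of the hand-over-hand locking list: the nodes reachable
from `Head` via next pointers. -/
def AbS (S : HState Node) : Set Node := {n | HReach S n}

/-- Labels of the atomic events of the hand-over-hand locking list. -/
inductive Lbl (Node : Type)
  | lock    (n : Node)
  | unlock  (n : Node)
  | newNode (n1 n2 n3 : Node)   -- creation of n3 and the write n3.next := n2
  | addLP   (n1 n2 n3 : Node)   -- the HoHAdd LP write n1.next := n3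
  | remLP   (n1 n2 : Node)      -- the HoHRemove LP write n1.next := n2.next

/-- The labelled atomic events of the hand-over-hand locking list.  `HoHAdd`
creates an initially unreachable fresh node `n3` (setting `n3.next := n2` does
not affect reachability since nothing points to `n3`), then links it by
`n1.next := n3`, where `n1` is reachable and locked with `n1.next = n2`;
`HoHRemove` sets `n1.next := n2.next` for reachable, locked, adjacent
`n1, n2`. -/
inductive HStep : Lbl Node → HState Node → HState Node → Prop
  | lock (S : HState Node) (n : Node) :
      HStep (Lbl.lock n) S { S with lockd := upd S.lockd n true }
  | unlock (S : HState Node) (n : Node) :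
      HStep (Lbl.unlock n) S { S with lockd := upd S.lockd n false }
  | newNode (S : HState Node) (n1 n2 n3 : Node) :
      S.lockd n1 = true → S.lockd n2 = true →
      S.nxt n1 = some n2 → HReach S n1 →
      ¬ HReach S n3 → (∀ m, S.nxt m ≠ some n3) →
      S.val n1 < S.val n3 → S.val n3 < S.val n2 →
      HStep (Lbl.newNode n1 n2 n3) S { S with nxt := upd S.nxt n3 (some n2) }
  | addLP (S : HState Node) (n1 n2 n3 : Node) :
      S.lockd n1 = true → S.lockd n2 = true →
      S.nxt n1 = some n2 → HReach S n1 →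
      ¬ HReach S n3 → (∀ m, S.nxt m ≠ some n3) →
      S.nxt n3 = some n2 →
      S.val n1 < S.val n3 → S.val n3 < S.val n2 →
      HStep (Lbl.addLP n1 n2 n3) S { S with nxt := upd S.nxt n1 (some n3) }
  | remLP (S : HState Node) (n1 n2 : Node) :
      S.lockd n1 = true → S.lockd n2 = true →
      S.nxt n1 = some n2 → HReach S n1 →
      HStep (Lbl.remLP n1 n2) S { S with nxt := upd S.nxt n1 (S.nxt n2) }

lemma upd_same {α : Type} (f : Node → α) (n : Node) (a : α) : upd f n a n = a := by
  simp [upd]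

lemma upd_other {α : Type} (f : Node → α) {m n : Node} (a : α) (h : m ≠ n) :
    upd f n a m = f m := by
  simp [upd, h]

lemma rtg_comparable {α : Type*} {R : α → α → Prop}
    (hdet : ∀ a b c, R a b → R a c → b = c) {a x y : α}
    (hx : Relation.ReflTransGen R a x) (hy : Relation.ReflTransGen R a y) :
    Relation.ReflTransGen R x y ∨ Relation.ReflTransGen R y x := by
  induction hx with
  | refl => exact Or.inl hy
  | tail _ hbc ih =>
    rcases ih with h | h
    · rcases h.cases_head with rfl | ⟨d, hbd, hdy⟩
      · exact Or.inr (Relation.ReflTransGen.single hbc)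
      · rw [hdet _ _ _ hbd hbc] at hdy
        exact Or.inl hdy
    · exact Or.inr (h.tail hbc)

lemma rtg_val_le {Node : Type} (S : HState Node)
    (hsort : ∀ a b, S.nxt a = some b → S.val a < S.val b)
    {x y : Node} (h : Relation.ReflTransGen (fun a b => S.nxt a = some b) x y) :
    S.val x ≤ S.val y := by
  induction h with
  | refl => exact le_rfl
  | tail _ hbc ih => exact ih.trans (hsort _ _ hbc).le

/-- In the hand-over-hand locking list (whose state is
strictly sorted by key), the only events that change the abstract set `AbS`
are the `HoHAdd` LP write `n1.next := n3` and the `HoHRemove` LP write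
`n1.next := n2.next`; moreover the former adds exactly `{n3}` to `AbS` and
the latter removes exactly `{n2}` from `AbS`, while every other event leaves
`AbS` unchanged. -/
theorem hoh_only_lp_events_change_abs
    (l : Lbl Node) (S S' : HState Node)
    (hstep : HStep l S S')
    -- strict sortedness of the pre-state
    (hsort : ∀ a b, S.nxt a = some b → S.val a < S.val b) :
    (∀ n1 n2 n3, l = Lbl.addLP n1 n2 n3 → AbS S' = AbS S ∪ {n3}) ∧
    (∀ n1 n2, l = Lbl.remLP n1 n2 → AbS S' = AbS S \ {n2}) ∧
    ((∀ n1 n2 n3 : Node, l ≠ Lbl.addLP n1 n2 n3) →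
     (∀ n1 n2 : Node, l ≠ Lbl.remLP n1 n2) → AbS S' = AbS S) := by
  have hdet : ∀ a b c : Node, S.nxt a = some b → S.nxt a = some c → b = c := by
    intro a b c h1 h2; rw [h1] at h2; exact Option.some.inj h2
  cases hstep with
  | lock S n =>
      refine ⟨?_, ?_, ?_⟩
      · intro _ _ _ h; cases h
      · intro _ _ h; cases h
      · intro _ _; rfl
  | unlock S n =>
      refine ⟨?_, ?_, ?_⟩
      · intro _ _ _ h; cases h
      · intro _ _ h; cases h
      · intro _ _; rfl
  | newNode S n1 n2 n3 hl1 hl2 hnx hr1 hn3 hnone hv1 hv2 =>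
      refine ⟨?_, ?_, ?_⟩
      · intro _ _ _ h; cases h
      · intro _ _ h; cases h
      intro _ _
      have hne : n2 ≠ n3 := fun h => absurd (h ▸ hv2) (lt_irrefl _)
      have hhead : S.head ≠ n3 := fun h => hn3 (h ▸ Relation.ReflTransGen.refl)
      ext x
      simp only [AbS, Set.mem_setOf_eq]
      constructor
      · intro hx
        have key : ∀ y, HReach { S with nxt := upd S.nxt n3 (some n2) } y →
            HReach S y ∧ y ≠ n3 := by
          intro y hy
          induction hy with
          | refl => exact ⟨Relation.ReflTransGen.refl, hhead⟩
          | @tail b c hab hbc ih =>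
            have hbc' : upd S.nxt n3 (some n2) b = some c := hbc
            rw [upd_other _ _ ih.2] at hbc'
            exact ⟨ih.1.tail hbc', fun h => hnone b (h ▸ hbc')⟩
        exact (key x hx).1
      · intro hx
        have key : ∀ y, HReach S y →
            HReach { S with nxt := upd S.nxt n3 (some n2) } y := by
          intro y hy
          induction hy with
          | refl => exact Relation.ReflTransGen.refl
          | @tail b c hab hbc ih =>
            have hb3 : b ≠ n3 := fun h => hn3 (h ▸ hab)
            have hbc' : upd S.nxt n3 (some n2) b = some c := by
              rw [upd_other _ _ hb3]; exact hbc
            exact ih.tail hbc'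
        exact key x hx
  | addLP S n1 n2 n3 hl1 hl2 hnx hr1 hn3 hnone hn3x hv1 hv2 =>
      refine ⟨?_, ?_, ?_⟩
      · intro m1 m2 m3 h
        injection h with e1 e2 e3
        rw [← e3]
        have h31 : n3 ≠ n1 := fun h => absurd (h ▸ hv1) (lt_irrefl _)
        have hhead : S.head ≠ n3 := fun h => hn3 (h ▸ Relation.ReflTransGen.refl)
        have hr2 : HReach S n2 := hr1.tail hnx
        ext x
        simp only [AbS, Set.union_singleton, Set.mem_setOf_eq, Set.mem_insert_iff]
        constructor
        · intro hx
          have key : ∀ y, HReach { S with nxt := upd S.nxt n1 (some n3) } y →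
              HReach S y ∨ y = n3 := by
            intro y hy
            induction hy with
            | refl => exact Or.inl Relation.ReflTransGen.refl
            | @tail b c hab hbc ih =>
              have hbc' : upd S.nxt n1 (some n3) b = some c := hbc
              rcases ih with hb | rfl
              · by_cases hb1 : b = n1
                · subst hb1
                  rw [upd_same] at hbc'
                  exact Or.inr (Option.some.inj hbc').symm
                · rw [upd_other _ _ hb1] at hbc'
                  exact Or.inl (hb.tail hbc')
              · rw [upd_other _ _ h31] at hbc'
                rw [hdet _ _ _ hbc' hn3x]
                exact Or.inl hr2
          rcases key x hx with h | h
          · exact Or.inr h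
          · exact Or.inl h
        · intro hx
          have key : ∀ y, HReach S y →
              HReach { S with nxt := upd S.nxt n1 (some n3) } y := by
            intro y hy
            induction hy with
            | refl => exact Relation.ReflTransGen.refl
            | @tail b c hab hbc ih =>
              by_cases hb1 : b = n1
              · have e1 : upd S.nxt n1 (some n3) b = some n3 := by
                  rw [hb1, upd_same]
                have hc2 : c = n2 := by rw [hb1] at hbc; exact hdet _ _ _ hbc hnx
                have e2 : upd S.nxt n1 (some n3) n3 = some c := by
                  rw [upd_other _ _ h31, hn3x, hc2]
                exact (ih.tail e1).tail e2
              · have hbc' : upd S.nxt n1 (some n3) b = some c := by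
                  rw [upd_other _ _ hb1]; exact hbc
                exact ih.tail hbc'
          have hr1' : HReach { S with nxt := upd S.nxt n1 (some n3) } n1 := key n1 hr1
          have e1 : upd S.nxt n1 (some n3) n1 = some n3 := upd_same _ _ _
          rcases hx with rfl | hx
          · exact hr1'.tail e1
          · exact key x hx
      · intro _ _ h; cases h
      · intro habs _; exact absurd rfl (habs n1 n2 n3)
  | remLP S n1 n2 hl1 hl2 hnx hr1 =>
      refine ⟨?_, ?_, ?_⟩
      · intro _ _ _ h; cases h
      · intro m1 m2 h
        injection h with e1 e2
        rw [← e2]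
        have h12 : n1 ≠ n2 := fun h => absurd (h ▸ hsort _ _ hnx) (lt_irrefl _)
        have hv12 : S.val n1 < S.val n2 := hsort _ _ hnx
        have hhead : S.head ≠ n2 := by
          intro h
          have hle := rtg_val_le S hsort hr1
          rw [h] at hle
          exact absurd (lt_of_le_of_lt hle hv12) (lt_irrefl _)
        have hr1'' : HReach { S with nxt := upd S.nxt n1 (S.nxt n2) } n1 := by
          have key : ∀ y, Relation.ReflTransGen (fun a b => S.nxt a = some b) y n1 →
              Relation.ReflTransGen (fun a b => upd S.nxt n1 (S.nxt n2) a = some b) y n1 := by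
            intro y hy
            induction hy using Relation.ReflTransGen.head_induction_on with
            | refl => exact Relation.ReflTransGen.refl
            | @head b c hbc hcn ih =>
              have hb1 : b ≠ n1 := by
                rintro rfl
                have hc2 : c = n2 := hdet _ _ _ hbc hnx
                subst hc2
                have hle := rtg_val_le S hsort hcn
                exact absurd (lt_of_le_of_lt hle hv12) (lt_irrefl _)
              have hbc' : upd S.nxt n1 (S.nxt n2) b = some c := by
                rw [upd_other _ _ hb1]; exact hbc
              exact Relation.ReflTransGen.head hbc' ih
          exact key _ hr1
        ext x
        simp only [AbS, Set.mem_setOf_eq, Set.mem_diff, Set.mem_singleton_iff]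
        constructor
        · intro hx
          have key : ∀ y, HReach { S with nxt := upd S.nxt n1 (S.nxt n2) } y →
              HReach S y ∧ y ≠ n2 := by
            intro y hy
            induction hy with
            | refl => exact ⟨Relation.ReflTransGen.refl, hhead⟩
            | @tail b c hab hbc ih =>
              obtain ⟨hb, hb2⟩ := ih
              have hbc' : upd S.nxt n1 (S.nxt n2) b = some c := hbc
              by_cases hb1 : b = n1
              · subst hb1
                rw [upd_same] at hbc'
                have hc2 : c ≠ n2 := by
                  rintro rfl
                  exact absurd (hsort _ _ hbc') (lt_irrefl _)
                exact ⟨(hr1.tail hnx).tail hbc', hc2⟩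
              · rw [upd_other _ _ hb1] at hbc'
                refine ⟨hb.tail hbc', ?_⟩
                intro hceq
                have hbc2 : S.nxt b = some n2 := hceq ▸ hbc'
                rcases rtg_comparable hdet hb hr1 with h | h
                · rcases h.cases_head with heq | ⟨d, hbd, hdn⟩
                  · exact hb1 heq
                  · rw [hdet _ _ _ hbd hbc2] at hdn
                    have hle := rtg_val_le S hsort hdn
                    exact absurd (lt_of_le_of_lt hle hv12) (lt_irrefl _)
                · rcases h.cases_head with heq | ⟨d, hnd, hdb⟩
                  · exact hb1 heq.symm
                  · rw [hdet _ _ _ hnd hnx] at hdb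
                    have hle := rtg_val_le S hsort hdb
                    have hlt := hsort _ _ hbc2
                    exact absurd (lt_of_le_of_lt hle hlt) (lt_irrefl _)
          exact key x hx
        · rintro ⟨hx, hx2⟩
          have key : ∀ y, HReach S y →
              y = n2 ∨ HReach { S with nxt := upd S.nxt n1 (S.nxt n2) } y := by
            intro y hy
            induction hy with
            | refl => exact Or.inr Relation.ReflTransGen.refl
            | @tail b c hab hbc ih =>
              rcases ih with heq | hb
              · right
                have e1 : upd S.nxt n1 (S.nxt n2) n1 = some c := by
                  rw [upd_same, ← heq]; exact hbc
                exact hr1''.tail e1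
              · by_cases hb1 : b = n1
                · rw [hb1] at hbc
                  exact Or.inl (hdet _ _ _ hbc hnx)
                · right
                  have hbc' : upd S.nxt n1 (S.nxt n2) b = some c := by
                    rw [upd_other _ _ hb1]; exact hbc
                  exact hb.tail hbc'
          rcases key x hx with rfl | h
          · exact absurd rfl hx2
          · exact h
      · intro _ habs; exact absurd rfl (habs n1 n2)
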